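/- arXiv:1803.01735 — 2 statements merged into one kernel-verified Lean document; each statement's English description precedes it below -/
import Mathlib

section
/- For 0 ≤ i ≤ n, the dual Bernstein polynomial admits the short expansion D^n_i(x; α, β) = [(-1)^{n-i} (σ+1)_n / (K (α+1)_{n-i} (β+1)_i)] · Σ_{k=0}^{i} [(-i)_k / (-n)_k] R^{(α, β+k+1)}_{n-k}(x), where σ = α+β+1 and K = Γ(α+1)Γ(β+1)/Γ(σ+1). -/
open scoped BigOperators
open MeasureTheory Polynomial

/-- Pochhammer symbol `(c)_l = c (c+1) ⋯ (c+l-1)`. -/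
noncomputable def poch (c : ℝ) (l : ℕ) : ℝ := ∏ j ∈ Finset.range l, (c + j)

/-- Shifted Jacobi polynomial `R_k^{(α,β)}(x)`. -/
noncomputable def jacobiR (α β : ℝ) (k : ℕ) (x : ℝ) : ℝ :=
  poch (α + 1) k / (Nat.factorial k) *
    ∑ l ∈ Finset.range (k + 1),
      poch (-(k : ℝ)) l * poch ((k : ℝ) + α + β + 1) l /
        (poch (α + 1) l * (Nat.factorial l)) * (1 - x) ^ l

/-- Hahn polynomial `Q_k(x; α, β; N)`. -/
noncomputable def hahnQ (α β : ℝ) (N k : ℕ) (x : ℝ) : ℝ :=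
  ∑ l ∈ Finset.range (k + 1),
    poch (-(k : ℝ)) l * poch ((k : ℝ) + α + β + 1) l * poch (-x) l /
      (poch (α + 1) l * poch (-(N : ℝ)) l * (Nat.factorial l))

/-- Bernstein basis polynomial `B^n_i(x)` as a real function. -/
noncomputable def bern (n i : ℕ) (x : ℝ) : ℝ :=
  (n.choose i : ℝ) * x ^ i * (1 - x) ^ (n - i)

/-- `D 0, …, D n` are the dual Bernstein polynomials of degree `n` with
parameters `α, β`: they have degree at most `n` and are biorthogonal to the
Bernstein basis w.r.t. the weight `(1-x)^α x^β` on `[0,1]`. -/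
def IsDualBernstein (n : ℕ) (α β : ℝ) (D : ℕ → Polynomial ℝ) : Prop :=
  (∀ j, j ≤ n → (D j).natDegree ≤ n) ∧
  ∀ i, i ≤ n → ∀ j, j ≤ n →
    (∫ x in (0:ℝ)..1, (1 - x) ^ α * x ^ β * bern n i x * (D j).eval x)
      = if i = j then (1:ℝ) else 0


lemma poch_zero (c : ℝ) : poch c 0 = 1 := by simp [poch]

lemma poch_succ (c : ℝ) (l : ℕ) : poch c (l + 1) = poch c l * (c + l) := by
  simp [poch, Finset.prod_range_succ]

lemma poch_succ' (c : ℝ) (l : ℕ) : poch c (l + 1) = c * poch (c + 1) l := by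
  rw [poch, Finset.prod_range_succ', poch, Nat.cast_zero, add_zero, mul_comm]
  congr 1
  exact Finset.prod_congr rfl fun j _ => by push_cast; ring

lemma poch_pos {c : ℝ} (hc : 0 < c) (l : ℕ) : 0 < poch c l := by
  apply Finset.prod_pos
  intro j _
  positivity

lemma poch_ne_zero {c : ℝ} (hc : 0 < c) (l : ℕ) : poch c l ≠ 0 := (poch_pos hc l).ne'

lemma Gamma_poch {c : ℝ} (hc : 0 < c) (l : ℕ) :
    Real.Gamma (c + l) = Real.Gamma c * poch c l := by
  induction l with
  | zero => simp [poch_zero]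
  | succ l ih =>
    have h1 : c + (l + 1 : ℕ) = (c + l) + 1 := by push_cast; ring
    rw [h1, Real.Gamma_add_one (by positivity), ih, poch_succ]
    ring

lemma poch_neg_nat_eq_zero {M l : ℕ} (h : M < l) : poch (-(M : ℝ)) l = 0 := by
  apply Finset.prod_eq_zero (Finset.mem_range.2 h)
  simp

lemma poch_neg_nat {M l : ℕ} (h : l ≤ M) :
    poch (-(M : ℝ)) l = (-1) ^ l * (M.choose l) * l.factorial := by
  induction l with
  | zero => simp [poch_zero]
  | succ l ih =>
    have hl : l ≤ M := Nat.le_of_succ_le h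
    rw [poch_succ, ih hl]
    have key : (M.choose (l+1) : ℝ) * (l+1) = M.choose l * (M - l) := by
      have := Nat.choose_succ_right_eq M l
      have hcast : ((M.choose (l+1) * (l+1) : ℕ) : ℝ) = ((M.choose l * (M - l) : ℕ) : ℝ) := by
        rw [this]
      push_cast [Nat.cast_sub hl] at hcast
      linarith
    have : (-(M:ℝ)) + l = -((M:ℝ) - l) := by ring
    rw [this]
    push_cast [Nat.factorial_succ]
    rw [pow_succ]
    linear_combination ((-1:ℝ)^l * (l.factorial:ℝ)) * key

lemma chu' : ∀ (m : ℕ) (b c : ℝ), 0 < c →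
    ∑ l ∈ Finset.range (m+1), (-1:ℝ)^l * (m.choose l) * poch b l / poch c l
      = poch (c-b) m / poch c m := by
  intro m
  induction m with
  | zero => intro b c hc; simp [poch_zero]
  | succ m ih =>
    intro b c hc
    have hc0 : c ≠ 0 := hc.ne'
    have hc1 : (0:ℝ) < c + 1 := by linarith
    have hQ : poch (c+1) m ≠ 0 := poch_ne_zero hc1 m
    have hP : poch c m ≠ 0 := poch_ne_zero hc m
    have hsplit : ∀ l : ℕ, (-1:ℝ)^(l+1) * ((m+1).choose (l+1)) * poch b (l+1) / poch c (l+1)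
        = (-1:ℝ)^(l+1) * (m.choose (l+1)) * poch b (l+1) / poch c (l+1)
          + (-(b/c)) * ((-1:ℝ)^l * (m.choose l) * poch (b+1) l / poch (c+1) l) := by
      intro l
      have hcl : poch (c+1) l ≠ 0 := poch_ne_zero hc1 l
      rw [Nat.choose_succ_succ, poch_succ' b l, poch_succ' c l]
      push_cast
      field_simp
      ring
    rw [Finset.sum_range_succ'
      (fun l => (-1:ℝ)^l * ((m+1).choose l) * poch b l / poch c l) (m+1)]
    simp only [hsplit]
    rw [Finset.sum_add_distrib]
    have h1 : (∑ l ∈ Finset.range (m+1),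
          (-1:ℝ)^(l+1) * (m.choose (l+1)) * poch b (l+1) / poch c (l+1))
        + (-1:ℝ)^0 * ((m+1).choose 0) * poch b 0 / poch c 0
        = ∑ l ∈ Finset.range (m+1), (-1:ℝ)^l * (m.choose l) * poch b l / poch c l := by
      have := (Finset.sum_range_succ'
        (fun l => (-1:ℝ)^l * (m.choose l) * poch b l / poch c l) (m+1)).symm
      simp only [Nat.choose_zero_right, Nat.cast_one, pow_zero] at this ⊢
      rw [this, Finset.sum_range_succ]
      simp [Nat.choose_succ_self]
    have h2 : ∑ l ∈ Finset.range (m+1),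
          (-(b/c)) * ((-1:ℝ)^l * (m.choose l) * poch (b+1) l / poch (c+1) l)
        = (-(b/c)) * (poch (c+1-(b+1)) m / poch (c+1) m) := by
      rw [← Finset.mul_sum, ih (b+1) (c+1) hc1]
    rw [add_right_comm, h1, ih b c hc, h2]
    have e1 : c + 1 - (b + 1) = c - b := by ring
    rw [e1, poch_succ (c-b) m, poch_succ' c m]
    have hrel : c * poch (c+1) m = poch c m * (c + m) := by
      rw [← poch_succ', poch_succ]
    have hcm : c + (m:ℝ) ≠ 0 := by positivity
    field_simp
    linear_combination poch (c-b) m * hrel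

lemma chu (m : ℕ) (b c : ℝ) (hc : 0 < c) :
    ∑ l ∈ Finset.range (m+1), poch (-(m:ℝ)) l * poch b l / (poch c l * l.factorial)
      = poch (c-b) m / poch c m := by
  rw [← chu' m b c hc]
  apply Finset.sum_congr rfl
  intro l hl
  have hl' : l ≤ m := Nat.lt_succ_iff.1 (Finset.mem_range.1 hl)
  rw [poch_neg_nat hl']
  have h1 : (l.factorial : ℝ) ≠ 0 := by positivity
  have h2 : poch c l ≠ 0 := poch_ne_zero hc l
  field_simp

lemma neg_one_pow_sub {a b : ℕ} (h : b ≤ a) : ((-1:ℝ))^(a-b) = (-1)^a * (-1)^b := by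
  have h1 : ((-1:ℝ))^(a-b) * (-1)^b = (-1)^a := by
    rw [← pow_add, Nat.sub_add_cancel h]
  have h2 : ((-1:ℝ))^b * (-1)^b = 1 := by
    rw [← pow_add, ← two_mul, pow_mul]; norm_num
  calc ((-1:ℝ))^(a-b) = ((-1:ℝ))^(a-b) * ((-1)^b * (-1)^b) := by rw [h2, mul_one]
    _ = (-1)^a * (-1)^b := by rw [← mul_assoc, h1]

lemma key_sum (n i j : ℕ) (hi : i ≤ n) (hj : j ≤ n) :
    ∑ k ∈ Finset.range (i+1),
      poch (-(i:ℝ)) k / poch (-(n:ℝ)) k * (poch ((j:ℝ)-(n:ℝ)) (n-k) / (n-k).factorial)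
    = if i = j then ((-1):ℝ)^(n+i) * i.factorial * (n-i).factorial / n.factorial else 0 := by
  have hcast : (j:ℝ) - (n:ℝ) = -(((n-j:ℕ)):ℝ) := by
    rw [Nat.cast_sub hj]; ring
  -- rewrite each term
  have hterm : ∀ k ∈ Finset.range (i+1),
      poch (-(i:ℝ)) k / poch (-(n:ℝ)) k * (poch ((j:ℝ)-(n:ℝ)) (n-k) / (n-k).factorial)
      = if k < j then 0 else
          ((-1):ℝ)^(n-k) * i.factorial * (n-j).factorial /
            ((i-k).factorial * (k-j).factorial * n.factorial) := by
    intro k hk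
    have hk' : k ≤ i := Nat.lt_succ_iff.1 (Finset.mem_range.1 hk)
    have hkn : k ≤ n := hk'.trans hi
    by_cases hkj : k < j
    · rw [if_pos hkj, hcast, poch_neg_nat_eq_zero (by omega : (n-j) < (n-k))]
      simp
    · rw [if_neg hkj]
      push_neg at hkj
      rw [hcast, poch_neg_nat (by omega : (n-k) ≤ (n-j)),
        poch_neg_nat hk', poch_neg_nat hkn]
      rw [Nat.cast_choose ℝ hk', Nat.cast_choose ℝ hkn,
        Nat.cast_choose ℝ (by omega : (n-k) ≤ (n-j))]
      rw [(by omega : ((n-j)-(n-k)) = k - j)]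
      have f1 : (k.factorial : ℝ) ≠ 0 := by positivity
      have f2 : ((i-k).factorial : ℝ) ≠ 0 := by positivity
      have f3 : ((n-k).factorial : ℝ) ≠ 0 := by positivity
      have f4 : ((k-j).factorial : ℝ) ≠ 0 := by positivity
      have f5 : (n.factorial : ℝ) ≠ 0 := by positivity
      have f6 : (i.factorial : ℝ) ≠ 0 := by positivity
      have f7 : ((n-j).factorial : ℝ) ≠ 0 := by positivity
      have f8 : ((-1:ℝ))^k ≠ 0 := by
        intro h; have := pow_eq_zero_iff (n := k) (M₀ := ℝ) ?_ |>.1 h <;> norm_num at *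
      field_simp
  rw [Finset.sum_congr rfl hterm]
  by_cases hij : j ≤ i
  · -- split the range at j
    have hsplit : Finset.range (i+1) = Finset.Ico 0 (i+1) := by
      rw [Finset.range_eq_Ico]
    rw [hsplit, ← Finset.sum_Ico_consecutive _ (by omega : 0 ≤ j) (by omega : j ≤ i+1)]
    have hzero : ∑ k ∈ Finset.Ico 0 j, (if k < j then (0:ℝ) else
        ((-1):ℝ)^(n-k) * i.factorial * (n-j).factorial /
          ((i-k).factorial * (k-j).factorial * n.factorial)) = 0 := by
      apply Finset.sum_eq_zero
      intro k hk
      rw [if_pos (Finset.mem_Ico.1 hk).2]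
    rw [hzero, zero_add]
    rw [Finset.sum_Ico_eq_sum_range]
    have e2 : i + 1 - j = (i-j) + 1 := by omega
    rw [e2]
    set M := i - j with hM
    have hsum2 : ∀ t ∈ Finset.range (M+1),
        (if j + t < j then (0:ℝ) else
          ((-1):ℝ)^(n-(j+t)) * i.factorial * (n-j).factorial /
            ((i-(j+t)).factorial * ((j+t)-j).factorial * n.factorial))
        = ((-1):ℝ)^(n-j) * i.factorial * (n-j).factorial / (n.factorial * M.factorial)
            * ((-1)^t * (M.choose t)) := by
      intro t ht
      have ht' : t ≤ M := Nat.lt_succ_iff.1 (Finset.mem_range.1 ht)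
      rw [if_neg (by omega)]
      have e3 : i - (j+t) = M - t := by omega
      have e4 : (j+t) - j = t := by omega
      rw [e3, e4]
      have e5 : ((-1):ℝ)^(n-(j+t)) = (-1)^(n-j) * (-1)^t := by
        have h1 : n - (j+t) = (n-j) - t := by omega
        rw [h1, neg_one_pow_sub (by omega : t ≤ n - j)]
      rw [e5, Nat.cast_choose ℝ ht']
      have f1 : ((M-t).factorial : ℝ) ≠ 0 := by positivity
      have f2 : (t.factorial : ℝ) ≠ 0 := by positivity
      have f3 : (n.factorial : ℝ) ≠ 0 := by positivity
      have f4 : (M.factorial : ℝ) ≠ 0 := by positivity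
      field_simp
    rw [Finset.sum_congr rfl hsum2, ← Finset.mul_sum]
    have halt : ∑ t ∈ Finset.range (M+1), ((-1):ℝ)^t * (M.choose t)
        = if M = 0 then 1 else 0 := by
      have := Int.alternating_sum_range_choose (n := M)
      exact_mod_cast this
    rw [halt]
    by_cases hMe : M = 0
    · have hij' : i = j := by omega
      rw [if_pos hMe, if_pos hij', mul_one]
      have e6 : n - j = n - i := by omega
      rw [e6, hMe]
      have e7 : ((-1):ℝ)^(n-i) = (-1)^(n+i) := by
        rw [neg_one_pow_sub hi, pow_add]
      rw [e7]
      simp [Nat.factorial]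
    · rw [if_neg hMe, if_neg (by omega : ¬ i = j), mul_zero]
  · -- j > i : every term vanishes
    rw [if_neg (by omega : ¬ i = j)]
    apply Finset.sum_eq_zero
    intro k hk
    have hk' : k ≤ i := Nat.lt_succ_iff.1 (Finset.mem_range.1 hk)
    rw [if_pos (by omega : k < j)]

lemma rpow_split {y : ℝ} (hy : 0 ≤ y) {b : ℝ} (hb : -1 < b) (p : ℕ) :
    y ^ (b + p) = y ^ b * y ^ p := by
  rcases eq_or_lt_of_le hy with h|h
  · rw [← h]
    rcases Nat.eq_zero_or_pos p with hp|hp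
    · simp [hp]
    · have h1p : (1:ℝ) ≤ p := by exact_mod_cast hp
      rw [Real.zero_rpow (by linarith : b + (p:ℝ) ≠ 0),
        zero_pow (by omega : p ≠ 0), mul_zero]
  · rw [← Real.rpow_natCast y p, ← Real.rpow_add h]

lemma integrand_eq (a b : ℝ) (ha : -1 < a) (hb : -1 < b) (p q : ℕ) {x : ℝ}
    (hx0 : 0 ≤ x) (hx1 : x ≤ 1) :
    (1-x)^a * x^b * (x^p * (1-x)^q)
      = ((x:ℂ)^(((b+p+1:ℝ):ℂ) - 1) * (1-(x:ℂ))^(((a+q+1:ℝ):ℂ) - 1)).re := by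
  have h1 : ((x:ℂ))^(((b+p+1:ℝ):ℂ) - 1) = ((x ^ (b+(p:ℝ)) : ℝ) : ℂ) := by
    rw [(by push_cast; ring : (((b+p+1:ℝ)):ℂ) - 1 = (((b+(p:ℝ)):ℝ):ℂ))]
    rw [← Complex.ofReal_cpow hx0]
  have h2 : (1-(x:ℂ))^(((a+q+1:ℝ):ℂ) - 1) = (((1-x) ^ (a+(q:ℝ)) : ℝ) : ℂ) := by
    rw [(by push_cast; ring : (((a+q+1:ℝ)):ℂ) - 1 = (((a+(q:ℝ)):ℝ):ℂ)),
      (by push_cast; ring : 1-(x:ℂ) = (((1-x):ℝ):ℂ))]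
    rw [← Complex.ofReal_cpow (by linarith)]
  rw [h1, h2, ← Complex.ofReal_mul, Complex.ofReal_re]
  rw [rpow_split hx0 hb p, rpow_split (by linarith : (0:ℝ) ≤ 1 - x) ha q]
  ring

lemma beta_integrable (a b : ℝ) (ha : -1 < a) (hb : -1 < b) (p q : ℕ) :
    IntervalIntegrable (fun x : ℝ => (1-x)^a * x^b * (x^p * (1-x)^q)) volume 0 1 := by
  have hu : (0:ℝ) < b + p + 1 := by have : (0:ℝ) ≤ p := Nat.cast_nonneg p; linarith
  have hv : (0:ℝ) < a + q + 1 := by have : (0:ℝ) ≤ q := Nat.cast_nonneg q; linarith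
  have H := Complex.betaIntegral_convergent (u := ((b+p+1:ℝ):ℂ)) (v := ((a+q+1:ℝ):ℂ))
    (by simpa using hu) (by simpa using hv)
  have Hre : IntervalIntegrable
      (fun x : ℝ => (((x:ℂ)^(((b+p+1:ℝ):ℂ) - 1) * (1-(x:ℂ))^(((a+q+1:ℝ):ℂ) - 1)).re))
      volume 0 1 :=
    ⟨Complex.reCLM.integrable_comp H.1, Complex.reCLM.integrable_comp H.2⟩
  apply Hre.congr
  intro x hx
  have hx' : x ∈ Set.Ioc (0:ℝ) 1 := by
    simpa [Set.uIoc_of_le (by norm_num : (0:ℝ) ≤ 1)] using hx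
  exact (integrand_eq a b ha hb p q hx'.1.le hx'.2).symm

lemma beta_value (a b : ℝ) (ha : -1 < a) (hb : -1 < b) (p q : ℕ) :
    ∫ x in (0:ℝ)..1, (1-x)^a * x^b * (x^p * (1-x)^q)
      = Real.Gamma (b+p+1) * Real.Gamma (a+q+1) / Real.Gamma (a+b+p+q+2) := by
  have hu : (0:ℝ) < b + p + 1 := by have : (0:ℝ) ≤ p := Nat.cast_nonneg p; linarith
  have hv : (0:ℝ) < a + q + 1 := by have : (0:ℝ) ≤ q := Nat.cast_nonneg q; linarith
  have H := Complex.betaIntegral_convergent (u := ((b+p+1:ℝ):ℂ)) (v := ((a+q+1:ℝ):ℂ))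
    (by simpa using hu) (by simpa using hv)
  have step1 : ∫ x in (0:ℝ)..1, (1-x)^a * x^b * (x^p * (1-x)^q)
      = ∫ x in (0:ℝ)..1, (((x:ℂ)^(((b+p+1:ℝ):ℂ) - 1) * (1-(x:ℂ))^(((a+q+1:ℝ):ℂ) - 1)).re) := by
    apply intervalIntegral.integral_congr
    intro x hx
    rw [Set.uIcc_of_le (by norm_num : (0:ℝ) ≤ 1)] at hx
    exact integrand_eq a b ha hb p q hx.1 hx.2
  rw [step1]
  have step2 : ∫ x in (0:ℝ)..1, (((x:ℂ)^(((b+p+1:ℝ):ℂ) - 1) * (1-(x:ℂ))^(((a+q+1:ℝ):ℂ) - 1)).re)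
      = (Complex.betaIntegral ((b+p+1:ℝ):ℂ) ((a+q+1:ℝ):ℂ)).re := by
    rw [Complex.betaIntegral]
    exact Complex.reCLM.intervalIntegral_comp_comm H
  rw [step2]
  have hne : Complex.Gamma (((b+p+1:ℝ):ℂ) + ((a+q+1:ℝ):ℂ)) ≠ 0 := by
    apply Complex.Gamma_ne_zero_of_re_pos
    simp only [Complex.add_re, Complex.ofReal_re]
    linarith
  have hG := Complex.Gamma_mul_Gamma_eq_betaIntegral
    (s := ((b+p+1:ℝ):ℂ)) (t := ((a+q+1:ℝ):ℂ)) (by simpa using hu) (by simpa using hv)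
  have hBeta : Complex.betaIntegral ((b+p+1:ℝ):ℂ) ((a+q+1:ℝ):ℂ)
      = Complex.Gamma ((b+p+1:ℝ):ℂ) * Complex.Gamma ((a+q+1:ℝ):ℂ)
        / Complex.Gamma (((b+p+1:ℝ):ℂ) + ((a+q+1:ℝ):ℂ)) := by
    rw [eq_div_iff hne]
    linear_combination -hG
  rw [hBeta,
    (by push_cast; ring : ((b+(p:ℝ)+1:ℝ):ℂ) + ((a+(q:ℝ)+1:ℝ):ℂ) = ((a+b+(p:ℝ)+(q:ℝ)+2:ℝ):ℂ)),
    Complex.Gamma_ofReal, Complex.Gamma_ofReal, Complex.Gamma_ofReal,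
    ← Complex.ofReal_mul, ← Complex.ofReal_div, Complex.ofReal_re]

section MainIntegral

variable {α β : ℝ}

/-- weight times monomial pair -/
noncomputable def wfun (α β : ℝ) (j m : ℕ) (x : ℝ) : ℝ :=
  (1-x)^α * x^β * (x^j * (1-x)^m)

noncomputable def coefK (α β : ℝ) (n j k l : ℕ) : ℝ :=
  (n.choose j : ℝ) * (poch (α+1) (n-k) / (n-k).factorial)
    * (poch (-((n-k:ℕ):ℝ)) l * poch (α+β+(n:ℝ)+2) l / (poch (α+1) l * l.factorial))

lemma integrand_expand (n j k : ℕ) (hk : k ≤ n) (x : ℝ) :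
    (1-x)^α * x^β * bern n j x * jacobiR α (β+(k:ℝ)+1) (n-k) x
    = ∑ l ∈ Finset.range ((n-k) + 1), coefK α β n j k l * wfun α β j ((n-j)+l) x := by
  have hc : ((n-k:ℕ):ℝ) + α + (β+(k:ℝ)+1) + 1 = α+β+(n:ℝ)+2 := by
    rw [Nat.cast_sub hk]; ring
  rw [jacobiR, bern, hc]
  simp only [Finset.mul_sum, coefK, wfun]
  apply Finset.sum_congr rfl
  intro l _
  rw [pow_add]
  ring

lemma wfun_integrable (hα : -1 < α) (hβ : -1 < β) (j m : ℕ) :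
    IntervalIntegrable (wfun α β j m) volume 0 1 := by
  unfold wfun
  exact beta_integrable α β hα hβ j m

lemma wfun_integral (hα : -1 < α) (hβ : -1 < β) (j m : ℕ) :
    ∫ x in (0:ℝ)..1, wfun α β j m x
      = Real.Gamma (β+j+1) * Real.Gamma (α+m+1) / Real.Gamma (α+β+(j:ℝ)+(m:ℝ)+2) := by
  unfold wfun
  exact beta_value α β hα hβ j m

lemma integrable_w_bern_jacobi (hα : -1 < α) (hβ : -1 < β) (n j k : ℕ) (hk : k ≤ n) :
    IntervalIntegrable
      (fun x => (1-x)^α * x^β * bern n j x * jacobiR α (β+(k:ℝ)+1) (n-k) x) volume 0 1 := by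
  have h := IntervalIntegrable.sum (μ := volume) (a := (0:ℝ)) (b := (1:ℝ))
      (Finset.range ((n-k)+1))
      (f := fun l => fun x => coefK α β n j k l * wfun α β j ((n-j)+l) x)
      (fun l _ => (wfun_integrable hα hβ j ((n-j)+l)).const_mul _)
  have h' : IntervalIntegrable
      (fun x => ∑ l ∈ Finset.range ((n-k) + 1), coefK α β n j k l * wfun α β j ((n-j)+l) x)
      volume 0 1 := by
    convert h using 1
    · rfl
    ext x
    simp [Finset.sum_apply]
  exact h'.congr (fun x _ => (integrand_expand n j k hk x).symm)

lemma integral_w_bern_jacobi (hα : -1 < α) (hβ : -1 < β) (n j k : ℕ) (hj : j ≤ n)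
    (hk : k ≤ n) :
    ∫ x in (0:ℝ)..1, (1-x)^α * x^β * bern n j x * jacobiR α (β+(k:ℝ)+1) (n-k) x
    = (n.choose j : ℝ) * Real.Gamma (β+(j:ℝ)+1) * Real.Gamma (α+(n:ℝ)-(j:ℝ)+1)
        / Real.Gamma (α+β+(n:ℝ)+2)
        * (poch (α+1) (n-k) / (n-k).factorial)
        * (poch ((j:ℝ)-(n:ℝ)) (n-k) / poch (α+1) (n-k)) := by
  have h1 : ∫ x in (0:ℝ)..1, (1-x)^α * x^β * bern n j x * jacobiR α (β+(k:ℝ)+1) (n-k) x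
      = ∑ l ∈ Finset.range ((n-k) + 1), coefK α β n j k l * ∫ x in (0:ℝ)..1,
          wfun α β j ((n-j)+l) x := by
    rw [intervalIntegral.integral_congr (fun x _ => integrand_expand n j k hk x)]
    rw [intervalIntegral.integral_finset_sum
      (fun l _ => (wfun_integrable hα hβ j ((n-j)+l)).const_mul _)]
    exact Finset.sum_congr rfl fun l _ => intervalIntegral.integral_const_mul _ _
  rw [h1]
  have hα1 : (0:ℝ) < α + 1 := by linarith
  have hb2 : (0:ℝ) < α+β+(n:ℝ)+2 := by have : (0:ℝ) ≤ n := Nat.cast_nonneg n; linarith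
  have hb3 : (0:ℝ) < α+(n:ℝ)-(j:ℝ)+1 := by
    have : (j:ℝ) ≤ n := by exact_mod_cast hj
    linarith
  have h2 : ∀ l ∈ Finset.range ((n-k)+1),
      coefK α β n j k l * ∫ x in (0:ℝ)..1, wfun α β j ((n-j)+l) x
      = ((n.choose j : ℝ) * Real.Gamma (β+(j:ℝ)+1) * Real.Gamma (α+(n:ℝ)-(j:ℝ)+1)
          / Real.Gamma (α+β+(n:ℝ)+2) * (poch (α+1) (n-k) / (n-k).factorial))
        * (poch (-((n-k:ℕ):ℝ)) l * poch (α+(n:ℝ)-(j:ℝ)+1) l / (poch (α+1) l * l.factorial)) := by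
    intro l _
    rw [wfun_integral hα hβ j ((n-j)+l), coefK]
    have e1 : α + ((n-j:ℕ)+l:ℕ) + 1 = (α+(n:ℝ)-(j:ℝ)+1) + l := by
      push_cast [Nat.cast_sub hj]; ring
    have e2 : α+β+(j:ℝ)+(((n-j:ℕ)+l:ℕ):ℝ)+2 = (α+β+(n:ℝ)+2) + l := by
      push_cast [Nat.cast_sub hj]; ring
    rw [e1, e2, Gamma_poch hb3 l, Gamma_poch hb2 l]
    have g1 : poch (α+β+(n:ℝ)+2) l ≠ 0 := poch_ne_zero hb2 l
    have g2 : poch (α+1) l ≠ 0 := poch_ne_zero hα1 l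
    have g3 : (l.factorial : ℝ) ≠ 0 := by positivity
    have g4 : Real.Gamma (α+β+(n:ℝ)+2) ≠ 0 := (Real.Gamma_pos_of_pos hb2).ne'
    field_simp
  rw [Finset.sum_congr rfl h2, ← Finset.mul_sum]
  rw [chu (n-k) (α+(n:ℝ)-(j:ℝ)+1) (α+1) hα1]
  rw [(by ring : (α+1) - (α+(n:ℝ)-(j:ℝ)+1) = (j:ℝ)-(n:ℝ))]

end MainIntegral

section EpolySec

variable {α β : ℝ}

noncomputable def jacobiPoly (a b : ℝ) (m : ℕ) : Polynomial ℝ :=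
  Polynomial.C (poch (a+1) m / m.factorial) *
    ∑ l ∈ Finset.range (m+1),
      Polynomial.C (poch (-(m:ℝ)) l * poch ((m:ℝ)+a+b+1) l / (poch (a+1) l * l.factorial)) *
        (1 - Polynomial.X)^l

lemma jacobiPoly_eval (a b : ℝ) (m : ℕ) (x : ℝ) :
    (jacobiPoly a b m).eval x = jacobiR a b m x := by
  simp [jacobiPoly, jacobiR, Polynomial.eval_finset_sum]

lemma jacobiPoly_natDegree (a b : ℝ) (m : ℕ) : (jacobiPoly a b m).natDegree ≤ m := by
  apply Polynomial.natDegree_mul_le.trans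
  rw [Polynomial.natDegree_C, zero_add]
  apply Polynomial.natDegree_sum_le_of_forall_le
  intro l hl
  apply Polynomial.natDegree_mul_le.trans
  rw [Polynomial.natDegree_C, zero_add]
  apply (Polynomial.natDegree_pow_le).trans
  have h1 : (1 - Polynomial.X : Polynomial ℝ).natDegree ≤ 1 := by
    apply (Polynomial.natDegree_sub_le _ _).trans
    simp
  have hl' : l ≤ m := Nat.lt_succ_iff.1 (Finset.mem_range.1 hl)
  calc l * (1 - Polynomial.X : Polynomial ℝ).natDegree ≤ l * 1 := by
        exact Nat.mul_le_mul_left l h1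
    _ = l := mul_one l
    _ ≤ m := hl'

noncomputable def Epoly (n i : ℕ) (α β : ℝ) : Polynomial ℝ :=
  Polynomial.C ((-1)^(n-i) * poch (α+β+2) n /
      ((Real.Gamma (α+1) * Real.Gamma (β+1) / Real.Gamma (α+β+2)) * poch (α+1) (n-i)
        * poch (β+1) i)) *
    ∑ k ∈ Finset.range (i+1),
      Polynomial.C (poch (-(i:ℝ)) k / poch (-(n:ℝ)) k) * jacobiPoly α (β+(k:ℝ)+1) (n-k)

lemma Epoly_eval (n i : ℕ) (x : ℝ) :
    (Epoly n i α β).eval x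
      = ((-1)^(n-i) * poch (α+β+2) n /
          ((Real.Gamma (α+1) * Real.Gamma (β+1) / Real.Gamma (α+β+2)) * poch (α+1) (n-i)
            * poch (β+1) i)) *
        ∑ k ∈ Finset.range (i+1),
          poch (-(i:ℝ)) k / poch (-(n:ℝ)) k * jacobiR α (β+(k:ℝ)+1) (n-k) x := by
  simp [Epoly, Polynomial.eval_finset_sum, jacobiPoly_eval]

lemma Epoly_natDegree (n i : ℕ) : (Epoly n i α β).natDegree ≤ n := by
  apply Polynomial.natDegree_mul_le.trans
  rw [Polynomial.natDegree_C, zero_add]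
  apply Polynomial.natDegree_sum_le_of_forall_le
  intro k _
  apply Polynomial.natDegree_mul_le.trans
  rw [Polynomial.natDegree_C, zero_add]
  exact (jacobiPoly_natDegree _ _ _).trans (Nat.sub_le n k)

lemma Epoly_biorth (hα : -1 < α) (hβ : -1 < β) (n i j : ℕ) (hi : i ≤ n) (hj : j ≤ n) :
    ∫ x in (0:ℝ)..1, (1-x)^α * x^β * bern n j x * (Epoly n i α β).eval x
      = if j = i then 1 else 0 := by
  set pref : ℝ := (-1)^(n-i) * poch (α+β+2) n /
      ((Real.Gamma (α+1) * Real.Gamma (β+1) / Real.Gamma (α+β+2)) * poch (α+1) (n-i)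
        * poch (β+1) i) with hpref
  have hfun : ∀ x : ℝ, (1-x)^α * x^β * bern n j x * (Epoly n i α β).eval x
      = ∑ k ∈ Finset.range (i+1), (pref * (poch (-(i:ℝ)) k / poch (-(n:ℝ)) k)) *
          ((1-x)^α * x^β * bern n j x * jacobiR α (β+(k:ℝ)+1) (n-k) x) := by
    intro x
    rw [Epoly_eval, Finset.mul_sum, Finset.mul_sum]
    rw [Finset.sum_congr rfl (fun k _ => by ring :
      ∀ k ∈ Finset.range (i+1),
        (1-x)^α * x^β * bern n j x * (pref * (poch (-(i:ℝ)) k / poch (-(n:ℝ)) k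
          * jacobiR α (β+(k:ℝ)+1) (n-k) x))
        = (pref * (poch (-(i:ℝ)) k / poch (-(n:ℝ)) k)) *
          ((1-x)^α * x^β * bern n j x * jacobiR α (β+(k:ℝ)+1) (n-k) x))]
  have hint : ∫ x in (0:ℝ)..1, (1-x)^α * x^β * bern n j x * (Epoly n i α β).eval x
      = ∑ k ∈ Finset.range (i+1), (pref * (poch (-(i:ℝ)) k / poch (-(n:ℝ)) k)) *
          ∫ x in (0:ℝ)..1,
            (1-x)^α * x^β * bern n j x * jacobiR α (β+(k:ℝ)+1) (n-k) x := by
    rw [intervalIntegral.integral_congr (fun x _ => hfun x)]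
    rw [intervalIntegral.integral_finset_sum (fun k hk =>
      (integrable_w_bern_jacobi hα hβ n j k
        ((Nat.lt_succ_iff.1 (Finset.mem_range.1 hk)).trans hi)).const_mul _)]
    exact Finset.sum_congr rfl fun k _ => intervalIntegral.integral_const_mul _ _
  rw [hint]
  have hα1 : (0:ℝ) < α + 1 := by linarith
  set G : ℝ := (n.choose j : ℝ) * Real.Gamma (β+(j:ℝ)+1) * Real.Gamma (α+(n:ℝ)-(j:ℝ)+1)
      / Real.Gamma (α+β+(n:ℝ)+2) with hG
  have hterm : ∀ k ∈ Finset.range (i+1),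
      (pref * (poch (-(i:ℝ)) k / poch (-(n:ℝ)) k)) *
          ∫ x in (0:ℝ)..1,
            (1-x)^α * x^β * bern n j x * jacobiR α (β+(k:ℝ)+1) (n-k) x
      = (pref * G) * (poch (-(i:ℝ)) k / poch (-(n:ℝ)) k *
          (poch ((j:ℝ)-(n:ℝ)) (n-k) / (n-k).factorial)) := by
    intro k hk
    have hk' : k ≤ n := (Nat.lt_succ_iff.1 (Finset.mem_range.1 hk)).trans hi
    have g1 : poch (α+1) (n-k) ≠ 0 := poch_ne_zero hα1 (n-k)
    have hc : (poch (α+1) (n-k) / (((n-k).factorial:ℕ):ℝ))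
          * (poch ((j:ℝ)-(n:ℝ)) (n-k) / poch (α+1) (n-k))
        = poch ((j:ℝ)-(n:ℝ)) (n-k) / (((n-k).factorial:ℕ):ℝ) := by
      rw [div_mul_div_comm, mul_comm (poch (α+1) (n-k)) (poch ((j:ℝ)-(n:ℝ)) (n-k)),
        mul_div_mul_right _ _ g1]
    rw [integral_w_bern_jacobi hα hβ n j k hj hk', ← hG, mul_assoc G, hc]
    ring
  rw [Finset.sum_congr rfl hterm, ← Finset.mul_sum, key_sum n i j hi hj]
  by_cases hij : j = i
  · subst hij
    rw [if_pos rfl, if_pos rfl]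
    -- grand cancellation
    have hβ1 : (0:ℝ) < β + 1 := by linarith
    have hs : (0:ℝ) < α + β + 2 := by linarith
    have hjn : (j:ℝ) ≤ n := by exact_mod_cast hj
    have e1 : β+(j:ℝ)+1 = (β+1) + j := by ring
    have e2 : α+(n:ℝ)-(j:ℝ)+1 = (α+1) + ((n-j:ℕ):ℝ) := by
      rw [Nat.cast_sub hj]; ring
    have e3 : α+β+(n:ℝ)+2 = (α+β+2) + n := by ring
    rw [hG, hpref, e1, e2, e3, Gamma_poch hβ1 j, Gamma_poch hα1 (n-j), Gamma_poch hs n]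
    have p1 : Real.Gamma (α+1) ≠ 0 := (Real.Gamma_pos_of_pos hα1).ne'
    have p2 : Real.Gamma (β+1) ≠ 0 := (Real.Gamma_pos_of_pos hβ1).ne'
    have p3 : Real.Gamma (α+β+2) ≠ 0 := (Real.Gamma_pos_of_pos hs).ne'
    have p4 : poch (α+1) (n-j) ≠ 0 := poch_ne_zero hα1 (n-j)
    have p5 : poch (β+1) j ≠ 0 := poch_ne_zero hβ1 j
    have p6 : poch (α+β+2) n ≠ 0 := poch_ne_zero hs n
    have p7 : (n.factorial : ℝ) ≠ 0 := by positivity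
    have hchoose : (n.choose j : ℝ) * j.factorial * (n-j).factorial = n.factorial := by
      exact_mod_cast Nat.choose_mul_factorial_mul_factorial hj
    have a1 : ((-1:ℝ))^n * (-1)^n = 1 := by
      rw [← pow_add, ← two_mul, pow_mul]; norm_num
    have a2 : ((-1:ℝ))^j * (-1)^j = 1 := by
      rw [← pow_add, ← two_mul, pow_mul]; norm_num
    have hsign : ((-1:ℝ))^(n-j) * (-1)^(n+j) = 1 := by
      calc ((-1:ℝ))^(n-j) * (-1)^(n+j)
          = ((-1:ℝ)^n*(-1)^n) * ((-1)^j*(-1)^j) := by rw [neg_one_pow_sub hj, pow_add]; ring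
        _ = 1 := by rw [a1, a2, mul_one]
    field_simp
    linear_combination ((n.choose j : ℝ) * j.factorial * (n-j).factorial) * hsign + hchoose
  · rw [if_neg hij, if_neg (fun h => hij h.symm), mul_zero]

end EpolySec

section Uniq

variable {α β : ℝ}

lemma integrable_w_mono_poly (hα : -1 < α) (hβ : -1 < β) (p q : ℕ) (P : Polynomial ℝ) :
    IntervalIntegrable (fun x => wfun α β p q x * P.eval x) volume 0 1 := by
  have h := IntervalIntegrable.sum (μ := volume) (a := (0:ℝ)) (b := (1:ℝ))
      (Finset.range (P.natDegree + 1))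
      (f := fun m => fun x => P.coeff m * wfun α β (p+m) q x)
      (fun m _ => (wfun_integrable hα hβ (p+m) q).const_mul _)
  have h' : IntervalIntegrable
      (fun x => ∑ m ∈ Finset.range (P.natDegree + 1), P.coeff m * wfun α β (p+m) q x)
      volume 0 1 := by
    convert h using 1
    · rfl
    ext x
    simp [Finset.sum_apply]
  apply h'.congr
  intro x _
  symm
  beta_reduce
  rw [Polynomial.eval_eq_sum_range' (Nat.lt_succ_of_le le_rfl) x, Finset.mul_sum]
  apply Finset.sum_congr rfl
  intro m _
  simp only [wfun]
  rw [pow_add]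
  ring

lemma integrable_w_bern_poly (hα : -1 < α) (hβ : -1 < β) (n j : ℕ) (P : Polynomial ℝ) :
    IntervalIntegrable (fun x => (1-x)^α * x^β * bern n j x * P.eval x) volume 0 1 := by
  apply ((integrable_w_mono_poly hα hβ j (n-j) P).const_mul ((n.choose j : ℕ) : ℝ)).congr
  intro x _
  simp only [wfun, bern]
  ring

lemma orth_mono (hα : -1 < α) (hβ : -1 < β) (n : ℕ) (P : Polynomial ℝ)
    (horth : ∀ j, j ≤ n →
      ∫ x in (0:ℝ)..1, (1-x)^α * x^β * bern n j x * P.eval x = 0)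
    (m : ℕ) (hm : m ≤ n) :
    ∫ x in (0:ℝ)..1, (1-x)^α * x^β * x^m * P.eval x = 0 := by
  have hfun : ∀ x : ℝ, (1-x)^α * x^β * x^m * P.eval x
      = ∑ t ∈ Finset.range ((n-m)+1),
          (((n-m).choose t : ℝ) / (n.choose (m+t) : ℝ))
            * ((1-x)^α * x^β * bern n (m+t) x * P.eval x) := by
    intro x
    have hxm : (x:ℝ)^m = ∑ t ∈ Finset.range ((n-m)+1),
        ((n-m).choose t : ℝ) * (x^(m+t) * (1-x)^((n-m)-t)) := by
      have h1 : (x + (1-x))^(n-m)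
          = ∑ t ∈ Finset.range ((n-m)+1), x^t * (1-x)^((n-m)-t) * ((n-m).choose t : ℝ) :=
        add_pow x (1-x) (n-m)
      calc (x:ℝ)^m = x^m * (x + (1-x))^(n-m) := by
            rw [(by ring : x + (1-x) = (1:ℝ)), one_pow, mul_one]
        _ = _ := by
            rw [h1, Finset.mul_sum]
            apply Finset.sum_congr rfl
            intro t _
            rw [pow_add]
            ring
    calc (1-x)^α * x^β * x^m * P.eval x
        = ∑ t ∈ Finset.range ((n-m)+1),
            (((n-m).choose t : ℝ) * (x^(m+t) * (1-x)^((n-m)-t)))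
              * ((1-x)^α * x^β * P.eval x) := by
          rw [(by ring : (1-x)^α * x^β * x^m * P.eval x
            = x^m * ((1-x)^α * x^β * P.eval x)), hxm, Finset.sum_mul]
      _ = _ := by
          apply Finset.sum_congr rfl
          intro t ht
          have ht' : t ≤ n - m := Nat.lt_succ_iff.1 (Finset.mem_range.1 ht)
          have hmt : m + t ≤ n := by omega
          have e : n - (m+t) = (n-m) - t := by omega
          have hC : ((n.choose (m+t) : ℕ) : ℝ) ≠ 0 := by
            exact_mod_cast (Nat.choose_pos hmt).ne'
          rw [bern, e]
          field_simp
  rw [intervalIntegral.integral_congr (fun x _ => hfun x)]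
  rw [intervalIntegral.integral_finset_sum
    (fun t _ => (integrable_w_bern_poly hα hβ n (m+t) P).const_mul _)]
  apply Finset.sum_eq_zero
  intro t ht
  have ht' : t ≤ n - m := Nat.lt_succ_iff.1 (Finset.mem_range.1 ht)
  rw [intervalIntegral.integral_const_mul, horth (m+t) (by omega), mul_zero]

lemma sq_int_zero (hα : -1 < α) (hβ : -1 < β) (n : ℕ) (P : Polynomial ℝ)
    (hdeg : P.natDegree ≤ n)
    (horth : ∀ j, j ≤ n →
      ∫ x in (0:ℝ)..1, (1-x)^α * x^β * bern n j x * P.eval x = 0) :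
    ∫ x in (0:ℝ)..1, (1-x)^α * x^β * P.eval x * P.eval x = 0 := by
  have hfun : ∀ x : ℝ, (1-x)^α * x^β * P.eval x * P.eval x
      = ∑ m ∈ Finset.range (n+1), P.coeff m * ((1-x)^α * x^β * x^m * P.eval x) := by
    intro x
    conv_lhs => rw [(by ring : (1-x)^α * x^β * P.eval x * P.eval x
      = P.eval x * ((1-x)^α * x^β * P.eval x))]
    rw [Polynomial.eval_eq_sum_range' (Nat.lt_succ_of_le hdeg) x, Finset.sum_mul]
    apply Finset.sum_congr rfl
    intro m _
    ring
  rw [intervalIntegral.integral_congr (fun x _ => hfun x)]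
  have hint : ∀ m ∈ Finset.range (n+1), IntervalIntegrable
      (fun x => P.coeff m * ((1-x)^α * x^β * x^m * P.eval x)) volume 0 1 := by
    intro m _
    apply IntervalIntegrable.const_mul
    apply (integrable_w_mono_poly hα hβ m 0 P).congr
    intro x _
    simp only [wfun]
    ring
  rw [intervalIntegral.integral_finset_sum hint]
  apply Finset.sum_eq_zero
  intro m hm
  rw [intervalIntegral.integral_const_mul,
    orth_mono hα hβ n P horth m (Nat.lt_succ_iff.1 (Finset.mem_range.1 hm)), mul_zero]

lemma zero_of_orth (hα : -1 < α) (hβ : -1 < β) (n : ℕ) (P : Polynomial ℝ)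
    (hdeg : P.natDegree ≤ n)
    (horth : ∀ j, j ≤ n →
      ∫ x in (0:ℝ)..1, (1-x)^α * x^β * bern n j x * P.eval x = 0) :
    P = 0 := by
  by_contra hP0
  set F : ℝ → ℝ := fun x => (1-x)^α * x^β * P.eval x * P.eval x with hF
  have hPP : ∫ x in (0:ℝ)..1, F x = 0 := sq_int_zero hα hβ n P hdeg horth
  have hInt : IntervalIntegrable F volume 0 1 := by
    apply (integrable_w_mono_poly hα hβ 0 0 (P*P)).congr
    intro x _
    simp only [wfun, hF, Polynomial.eval_mul]
    ring
  have hIntOn : IntegrableOn F (Set.Ioc 0 1) volume :=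
    (intervalIntegrable_iff_integrableOn_Ioc_of_le zero_le_one).1 hInt
  rw [intervalIntegral.integral_of_le zero_le_one] at hPP
  have hnonneg : 0 ≤ᵐ[volume.restrict (Set.Ioc (0:ℝ) 1)] F := by
    rw [Filter.EventuallyLE, ae_restrict_iff' measurableSet_Ioc]
    apply Filter.Eventually.of_forall
    intro x hx
    have h1 : (0:ℝ) ≤ (1-x)^α := Real.rpow_nonneg (by linarith [hx.2]) α
    have h2 : (0:ℝ) ≤ x^β := Real.rpow_nonneg hx.1.le β
    simp only [hF, Pi.zero_apply]
    calc (0:ℝ) ≤ ((1-x)^α * x^β) * (P.eval x * P.eval x) :=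
          mul_nonneg (mul_nonneg h1 h2) (mul_self_nonneg _)
      _ = (1-x)^α * x^β * P.eval x * P.eval x := by ring
  have hzero : F =ᵐ[volume.restrict (Set.Ioc (0:ℝ) 1)] 0 :=
    (MeasureTheory.integral_eq_zero_iff_of_nonneg_ae hnonneg hIntOn).1 hPP
  have hnull : volume.restrict (Set.Ioc (0:ℝ) 1) {x | F x ≠ 0} = 0 := by
    have := hzero
    rw [Filter.EventuallyEq, ae_iff] at this
    simpa using this
  have hnull' : volume ({x | F x ≠ 0} ∩ Set.Ioc (0:ℝ) 1) = 0 := by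
    rw [← Measure.restrict_apply' measurableSet_Ioc]
    exact hnull
  -- the set where P doesn't vanish
  set S : Set ℝ := Set.Ioo (0:ℝ) 1 \ ↑(P.roots.toFinset) with hS
  have hsub : S ⊆ {x | F x ≠ 0} ∩ Set.Ioc (0:ℝ) 1 := by
    intro x hx
    obtain ⟨hx1, hx2⟩ := hx
    constructor
    · have hw1 : (0:ℝ) < (1-x)^α := Real.rpow_pos_of_pos (by linarith [hx1.2]) α
      have hw2 : (0:ℝ) < x^β := Real.rpow_pos_of_pos hx1.1 β
      have hev : P.eval x ≠ 0 := by
        intro h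
        apply hx2
        rw [Finset.mem_coe, Multiset.mem_toFinset, Polynomial.mem_roots hP0]
        exact h
      simp only [hF, Set.mem_setOf_eq]
      exact mul_ne_zero (mul_ne_zero (mul_ne_zero hw1.ne' hw2.ne') hev) hev
    · exact ⟨hx1.1, hx1.2.le⟩
  have hroots0 : volume (↑(P.roots.toFinset) : Set ℝ) = 0 :=
    (Finset.finite_toSet _).measure_zero _
  have hSmeas : volume S = 1 := by
    rw [hS, measure_diff_null hroots0]
    simp
  have : volume S = 0 := le_antisymm (hnull' ▸ measure_mono hsub) (bot_le)
  rw [hSmeas] at this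
  norm_num at this

end Uniq

/-- Short expansion of dual Bernstein polynomials in shifted Jacobi polynomials
with shifted parameters. -/
theorem dualBernstein_short_expansion (n : ℕ) (α β : ℝ) (hα : α > -1) (hβ : β > -1)
    (D : ℕ → Polynomial ℝ) (hD : IsDualBernstein n α β D)
    (i : ℕ) (hi : i ≤ n) (x : ℝ) :
    (D i).eval x
      = ((-1)^(n-i) * poch (α+β+2) n /
          ((Real.Gamma (α+1) * Real.Gamma (β+1) / Real.Gamma (α+β+2)) * poch (α+1) (n-i) * poch (β+1) i)) *
        ∑ k ∈ Finset.range (i+1),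
          poch (-(i:ℝ)) k / poch (-(n:ℝ)) k * jacobiR α (β+k+1) (n-k) x := by
  have hα' : -1 < α := hα
  have hβ' : -1 < β := hβ
  set E := Epoly n i α β with hE
  set P := D i - E with hP
  have hdeg : P.natDegree ≤ n :=
    (Polynomial.natDegree_sub_le _ _).trans (max_le (hD.1 i hi) (Epoly_natDegree n i))
  have horth : ∀ j, j ≤ n →
      ∫ x in (0:ℝ)..1, (1-x)^α * x^β * bern n j x * P.eval x = 0 := by
    intro j hj
    have h1 := hD.2 j hj i hi
    have h2 := Epoly_biorth hα' hβ' n i j hi hj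
    have hcongr : ∀ x : ℝ, (1-x)^α * x^β * bern n j x * P.eval x
        = ((1-x)^α * x^β * bern n j x * (D i).eval x)
            - ((1-x)^α * x^β * bern n j x * E.eval x) := by
      intro x
      rw [hP, Polynomial.eval_sub]
      ring
    rw [intervalIntegral.integral_congr (fun x _ => hcongr x)]
    rw [intervalIntegral.integral_sub (integrable_w_bern_poly hα' hβ' n j (D i))
      (integrable_w_bern_poly hα' hβ' n j E)]
    rw [h1, h2]
    simp
  have hPz : P = 0 := zero_of_orth hα' hβ' n P hdeg horth
  have hDi : D i = E := by
    have := hPz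
    rw [hP, sub_eq_zero] at this
    exact this
  rw [hDi, hE, Epoly_eval]
end

section
/- For 0 ≤ i ≤ n, the dual Bernstein polynomials satisfy x(x-1) D''^n_i(x) + (1/2)(α-β+(σ+1)(2x-1)) D'^n_i(x) = (i-n)(i+β+1) D^n_{i+1}(x) + i(i-α-n-1) D^n_{i-1}(x) - [i(i-α-n-1) + (i-n)(i+β+1)] D^n_i(x), where σ = α+β+1, D^n_i = D^n_i(·; α, β), and D^n_{-1} := D^n_{n+1} := 0. -/
open scoped BigOperators
open MeasureTheory Polynomial

namespace DBproof
open Set intervalIntegral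

noncomputable def dbPair (α β : ℝ) (p q : Polynomial ℝ) : ℝ :=
  ∫ x in (0:ℝ)..1, (1-x)^α * x^β * (p.eval x * q.eval x)

noncomputable def Jop (α β : ℝ) (p : Polynomial ℝ) : Polynomial ℝ :=
  Polynomial.X * (1 - Polynomial.X) * (derivative (derivative p)) +
    (Polynomial.C (β+1) - Polynomial.C (α+β+2) * Polynomial.X) * derivative p

lemma eval_bern (n j : ℕ) (x : ℝ) : (bernsteinPolynomial ℝ n j).eval x = bern n j x := by
  simp [bernsteinPolynomial, bern]

lemma integrable_weight_mul {α β : ℝ} (hα : α > -1) (hβ : β > -1) {f : ℝ → ℝ}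
    (hf : Continuous f) :
    IntervalIntegrable (fun x => (1-x)^α * x^β * f x) volume 0 1 := by
  have h1 : IntervalIntegrable (fun x => (1-x)^α * x^β * f x) volume 0 (1/2) := by
    have hb : IntervalIntegrable (fun x : ℝ => x^β) volume 0 (1/2) :=
      intervalIntegral.intervalIntegrable_rpow' hβ
    have hcont : ContinuousOn (fun x : ℝ => (1-x)^α * f x) (Set.uIcc 0 (1/2)) := by
      apply ContinuousOn.mul _ hf.continuousOn
      intro x hx
      apply ContinuousAt.continuousWithinAt
      apply ContinuousAt.rpow_const (by fun_prop)
      left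
      rw [Set.uIcc_of_le (by norm_num)] at hx
      intro h; nlinarith [hx.2]
    have := hb.mul_continuousOn hcont
    convert this using 1
    funext x; ring
  have h2 : IntervalIntegrable (fun x => (1-x)^α * x^β * f x) volume (1/2) 1 := by
    have hb : IntervalIntegrable (fun x : ℝ => x^α) volume 0 (1/2) :=
      intervalIntegral.intervalIntegrable_rpow' hα
    have hb' := (hb.comp_sub_left 1).symm
    norm_num at hb'
    have hcont : ContinuousOn (fun x : ℝ => x^β * f x) (Set.uIcc (1/2) 1) := by
      apply ContinuousOn.mul _ hf.continuousOn
      intro x hx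
      apply ContinuousAt.continuousWithinAt
      apply ContinuousAt.rpow_const (by fun_prop)
      left
      rw [Set.uIcc_of_le (by norm_num)] at hx
      intro h; nlinarith [hx.1]
    have := hb'.mul_continuousOn hcont
    convert this using 1
    funext x; ring
  exact h1.trans h2

lemma integrable_weight_poly {α β : ℝ} (hα : α > -1) (hβ : β > -1) (p : Polynomial ℝ) :
    IntervalIntegrable (fun x => (1-x)^α * x^β * p.eval x) volume 0 1 :=
  integrable_weight_mul hα hβ (Polynomial.continuous_aeval p)

lemma dbPair_comm (α β : ℝ) (p q : Polynomial ℝ) : dbPair α β p q = dbPair α β q p := by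
  unfold dbPair; congr 1; funext x; ring

lemma dbPair_add_right {α β : ℝ} (hα : α > -1) (hβ : β > -1) (q p₁ p₂ : Polynomial ℝ) :
    dbPair α β q (p₁ + p₂) = dbPair α β q p₁ + dbPair α β q p₂ := by
  unfold dbPair
  rw [← intervalIntegral.integral_add]
  · congr 1; funext x; simp only [eval_add]; ring
  · have := integrable_weight_poly hα hβ (q * p₁)
    convert this using 1; funext x; simp only [eval_mul]
  · have := integrable_weight_poly hα hβ (q * p₂)
    convert this using 1; funext x; simp only [eval_mul]

lemma dbPair_smul_right {α β : ℝ} (q p : Polynomial ℝ) (c : ℝ) :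
    dbPair α β q (c • p) = c * dbPair α β q p := by
  unfold dbPair
  rw [← intervalIntegral.integral_const_mul]
  congr 1; funext x; simp only [eval_smul, smul_eq_mul]; ring

lemma dbPair_zero_right (α β : ℝ) (q : Polynomial ℝ) : dbPair α β q 0 = 0 := by
  simp [dbPair]

lemma dbPair_zero_left (α β : ℝ) (q : Polynomial ℝ) : dbPair α β 0 q = 0 := by
  simp [dbPair]

lemma dbPair_sum_right {α β : ℝ} (hα : α > -1) (hβ : β > -1) (q : Polynomial ℝ)
    {ι : Type*} (s : Finset ι) (g : ι → ℝ) (p : ι → Polynomial ℝ) :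
    dbPair α β q (∑ j ∈ s, g j • p j) = ∑ j ∈ s, g j * dbPair α β q (p j) := by
  rw [eq_comm]
  calc ∑ j ∈ s, g j * dbPair α β q (p j)
      = ∑ j ∈ s, ∫ x in (0:ℝ)..1, (1-x)^α * x^β * (q.eval x * (g j * (p j).eval x)) := by
        refine Finset.sum_congr rfl fun j hj => ?_
        rw [dbPair, ← intervalIntegral.integral_const_mul]
        congr 1; funext x; ring
    _ = ∫ x in (0:ℝ)..1, ∑ j ∈ s, (1-x)^α * x^β * (q.eval x * (g j * (p j).eval x)) := by
        rw [intervalIntegral.integral_finset_sum]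
        intro j hj
        have := (integrable_weight_poly hα hβ (q * p j)).smul (g j)
        convert this using 1
        funext x; simp; ring
    _ = dbPair α β q (∑ j ∈ s, g j • p j) := by
        rw [dbPair]; congr 1; funext x
        rw [Polynomial.eval_finset_sum, Finset.mul_sum, Finset.mul_sum]
        refine Finset.sum_congr rfl fun j hj => ?_
        simp only [Polynomial.eval_smul, smul_eq_mul]

lemma natDegree_Jop_le {α β : ℝ} {n : ℕ} {p : Polynomial ℝ} (hp : p.natDegree ≤ n) :
    (Jop α β p).natDegree ≤ n := by
  unfold Jop
  apply le_trans (Polynomial.natDegree_add_le _ _)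
  rw [max_le_iff]
  constructor
  · rcases le_or_gt p.natDegree 1 with h | h
    · have : derivative (derivative p) = 0 := by
        have h0 : (derivative p).natDegree = 0 :=
          Nat.le_zero.mp (le_trans (Polynomial.natDegree_derivative_le p) (by omega))
        rw [Polynomial.eq_C_of_natDegree_le_zero (le_of_eq h0)]
        simp
      simp [this]
    · apply le_trans (Polynomial.natDegree_mul_le)
      have h1 : (Polynomial.X * (1 - Polynomial.X) : Polynomial ℝ).natDegree ≤ 2 := by
        have hx : (1 - Polynomial.X : Polynomial ℝ).natDegree ≤ 1 := by
          apply le_trans (Polynomial.natDegree_sub_le _ _); simp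
        calc (Polynomial.X * (1 - Polynomial.X) : Polynomial ℝ).natDegree
            ≤ (Polynomial.X : Polynomial ℝ).natDegree + (1 - Polynomial.X : Polynomial ℝ).natDegree := Polynomial.natDegree_mul_le
          _ ≤ 1 + 1 := by rw [Polynomial.natDegree_X]; omega
          _ = 2 := rfl
      have h2 : (derivative (derivative p)).natDegree ≤ p.natDegree - 2 := by
        have := Polynomial.natDegree_derivative_le (derivative p)
        have := Polynomial.natDegree_derivative_le p
        omega
      omega
  · rcases Nat.eq_zero_or_pos p.natDegree with h | h
    · have : derivative p = 0 := by
        rw [Polynomial.eq_C_of_natDegree_le_zero (le_of_eq h)]; simp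
      simp [this]
    · apply le_trans (Polynomial.natDegree_mul_le)
      have h1 : ((Polynomial.C (β+1) - Polynomial.C (α+β+2) * Polynomial.X) : Polynomial ℝ).natDegree ≤ 1 := by
        apply le_trans (Polynomial.natDegree_sub_le _ _)
        rw [max_le_iff]
        refine ⟨by simp, le_trans (Polynomial.natDegree_C_mul_le _ _) (by simp)⟩
      have h2 := Polynomial.natDegree_derivative_le p
      omega

lemma expansion {α β : ℝ} (hα : α > -1) (hβ : β > -1) {n : ℕ} {D : ℕ → Polynomial ℝ}
    (hdeg : ∀ j, j ≤ n → (D j).natDegree ≤ n)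
    (hbi : ∀ i, i ≤ n → ∀ j, j ≤ n →
      dbPair α β (bernsteinPolynomial ℝ n i) (D j) = if i = j then (1:ℝ) else 0)
    (p : Polynomial ℝ) (hp : p.natDegree ≤ n) :
    p = ∑ j : Fin (n+1),
        dbPair α β (bernsteinPolynomial ℝ n j) p • D j := by
  set V := Polynomial.degreeLT ℝ (n+1) with hV
  have memV : ∀ q : Polynomial ℝ, q.natDegree ≤ n → q ∈ V := by
    intro q hq
    rw [hV, Polynomial.mem_degreeLT]
    calc q.degree ≤ (q.natDegree : WithBot ℕ) := Polynomial.degree_le_natDegree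
      _ < ((n+1 : ℕ) : WithBot ℕ) := by exact_mod_cast Nat.lt_succ_of_le hq
  set Dv : Fin (n+1) → V := fun j => ⟨D j, memV _ (hdeg j (Nat.lt_succ_iff.mp j.isLt))⟩ with hDv
  have coe_sum : ∀ g : Fin (n+1) → ℝ,
      ((∑ j : Fin (n+1), g j • Dv j : V) : Polynomial ℝ) = ∑ j : Fin (n+1), g j • D j := by
    intro g
    push_cast
    rfl
  haveI : FiniteDimensional ℝ V := Module.Finite.equiv (Polynomial.degreeLTEquiv ℝ (n+1)).symm
  have hrank : Module.finrank ℝ V = n + 1 := by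
    rw [(Polynomial.degreeLTEquiv ℝ (n+1)).finrank_eq]
    simp
  have li : LinearIndependent ℝ Dv := by
    rw [Fintype.linearIndependent_iff]
    intro g hg i
    have hcoe : (∑ j : Fin (n+1), g j • D j) = 0 := by
      rw [← coe_sum, hg]; rfl
    have := dbPair_sum_right hα hβ (bernsteinPolynomial ℝ n i) Finset.univ g
      (fun j : Fin (n+1) => D j)
    rw [hcoe] at this
    have hz : dbPair α β (bernsteinPolynomial ℝ n i) 0 = 0 := by
      simp [dbPair]
    rw [hz] at this
    have h2 : (∑ j : Fin (n+1), g j * dbPair α β (bernsteinPolynomial ℝ n i) (D j))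
        = ∑ j : Fin (n+1), g j * (if (i:ℕ) = (j:ℕ) then (1:ℝ) else 0) :=
      Finset.sum_congr rfl fun j _ => by
        rw [hbi i (Nat.lt_succ_iff.mp i.isLt) j (Nat.lt_succ_iff.mp j.isLt)]
    rw [h2] at this
    simpa [Fin.val_eq_val, mul_ite, Finset.sum_ite_eq] using this.symm
  have card_eq : Fintype.card (Fin (n+1)) = Module.finrank ℝ V := by simp [hrank]
  let b : Module.Basis (Fin (n+1)) ℝ V := basisOfLinearIndependentOfCardEqFinrank li card_eq
  have hb : ⇑b = Dv := coe_basisOfLinearIndependentOfCardEqFinrank li card_eq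
  set pv : V := ⟨p, memV p hp⟩ with hpv
  have hsum := b.sum_repr pv
  have hpoly : p = ∑ j : Fin (n+1), b.repr pv j • D j := by
    have := congrArg (fun v : V => (v : Polynomial ℝ)) hsum
    change _ = p at this
    rw [← this]
    rw [← coe_sum (fun j => b.repr pv j)]
    congr 1
    refine Finset.sum_congr rfl fun j _ => ?_
    rw [hb]
  have hcoeff : ∀ i : Fin (n+1),
      dbPair α β (bernsteinPolynomial ℝ n i) p = b.repr pv i := by
    intro i
    conv_lhs => rw [hpoly]
    rw [dbPair_sum_right hα hβ]
    calc ∑ j : Fin (n+1), b.repr pv j * dbPair α β (bernsteinPolynomial ℝ n i) (D j)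
        = ∑ j : Fin (n+1), b.repr pv j * (if i = j then (1:ℝ) else 0) := by
          refine Finset.sum_congr rfl fun j _ => ?_
          rw [hbi i (Nat.lt_succ_iff.mp i.isLt) j (Nat.lt_succ_iff.mp j.isLt)]
          simp only [Fin.val_eq_val]
      _ = b.repr pv i := by simp [mul_ite, Finset.sum_ite_eq]
  have hfin : ∑ j : Fin (n+1), dbPair α β (bernsteinPolynomial ℝ n j) p • D j
      = ∑ j : Fin (n+1), b.repr pv j • D (j : ℕ) :=
    Finset.sum_congr rfl fun j _ => by rw [hcoeff j]
  rw [hfin]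
  exact hpoly

lemma dbPair_Jop_symm {α β : ℝ} (hα : α > -1) (hβ : β > -1) (u v : Polynomial ℝ) :
    dbPair α β u (Jop α β v) = dbPair α β (Jop α β u) v := by
  set H : Polynomial ℝ := u * derivative v - v * derivative u with hH
  set W : ℝ → ℝ := fun x => x^(β+1) * (1-x)^(α+1) with hWdef
  set F : ℝ → ℝ := fun x => W x * H.eval x with hFdef
  set G : ℝ → ℝ := fun x =>
    (1-x)^α * x^β * (u.eval x * (Jop α β v).eval x)
    - (1-x)^α * x^β * ((Jop α β u).eval x * v.eval x) with hGdef
  have hW : ∀ x ∈ Set.Ioo (0:ℝ) 1, HasDerivAt W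
      ((β+1)*(x^β*(1-x)^(α+1)) - (α+1)*(x^(β+1)*(1-x)^α)) x := by
    intro x hx
    have hx0 : x ≠ 0 := ne_of_gt hx.1
    have hx1 : (1:ℝ) - x ≠ 0 := sub_ne_zero.mpr (ne_of_gt hx.2)
    have h1 : HasDerivAt (fun y : ℝ => y^(β+1)) ((β+1)*x^(β+1-1)) x :=
      Real.hasDerivAt_rpow_const (Or.inl hx0)
    have h2' : HasDerivAt (fun y : ℝ => y^(α+1)) ((α+1)*(1-x)^(α+1-1)) (1-x) :=
      Real.hasDerivAt_rpow_const (Or.inl hx1)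
    have h3 : HasDerivAt (fun y : ℝ => (1:ℝ) - y) (-1) x := by
      simpa using (hasDerivAt_id x).const_sub 1
    have h2 := h2'.comp x h3
    have := h1.mul h2
    refine this.congr_deriv ?_
    simp only [Function.comp_def, add_sub_cancel_right]
    ring
  have hF : ∀ x ∈ Set.Ioo (0:ℝ) 1, HasDerivAt F (G x) x := by
    intro x hx
    have hx0 : x ≠ 0 := ne_of_gt hx.1
    have hx1 : (1:ℝ) - x ≠ 0 := sub_ne_zero.mpr (ne_of_gt hx.2)
    have hHd : HasDerivAt (fun y => H.eval y) ((derivative H).eval x) x :=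
      H.hasDerivAt x
    have := (hW x hx).mul hHd
    refine this.congr_deriv ?_
    have e1 : x^(β+1) = x^β * x := Real.rpow_add_one hx0 β
    have e2 : (1-x)^(α+1) = (1-x)^α * (1-x) := Real.rpow_add_one hx1 α
    rw [hGdef, hWdef, hH]
    simp only [Jop, derivative_sub, derivative_mul, eval_sub, eval_add, eval_mul,
      eval_one, eval_X, eval_C]
    rw [e1, e2]
    ring
  have hcont : ContinuousOn F (Set.Icc 0 1) := by
    apply Continuous.continuousOn
    apply Continuous.mul _ (Polynomial.continuous_aeval H)
    apply Continuous.mul (Real.continuous_rpow_const (by linarith))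
    exact (Real.continuous_rpow_const (by linarith)).comp (continuous_const.sub continuous_id)
  have hint : IntervalIntegrable G volume 0 1 := by
    have h1 := integrable_weight_poly hα hβ (u * Jop α β v)
    have h2 := integrable_weight_poly hα hβ (Jop α β u * v)
    have := h1.sub h2
    convert this using 1
    funext x; rw [hGdef]; simp only [eval_mul]
  have hFTC : ∫ x in (0:ℝ)..1, G x = F 1 - F 0 := by
    apply intervalIntegral.integral_eq_sub_of_hasDeriv_right_of_le (by norm_num) hcont
    · intro x hx
      exact (hF x hx).hasDerivWithinAt
    · exact hint
  have hF0 : F 0 = 0 := by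
    rw [hFdef, hWdef]
    simp [Real.zero_rpow (by linarith : β+1 ≠ 0)]
  have hF1 : F 1 = 0 := by
    rw [hFdef, hWdef]
    simp [Real.zero_rpow (by linarith : α+1 ≠ 0)]
  have hzero : ∫ x in (0:ℝ)..1, G x = 0 := by rw [hFTC, hF0, hF1]; ring
  have hsplit : ∫ x in (0:ℝ)..1, G x
      = dbPair α β u (Jop α β v) - dbPair α β (Jop α β u) v := by
    rw [hGdef, dbPair, dbPair]
    apply intervalIntegral.integral_sub
    · have := integrable_weight_poly hα hβ (u * Jop α β v)
      convert this using 1; funext x; simp only [eval_mul]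
    · have := integrable_weight_poly hα hβ (Jop α β u * v)
      convert this using 1; funext x; simp only [eval_mul]
  have := hsplit ▸ hzero
  linarith [this]

lemma cast_mul_pow_pred {j : ℕ} {x : ℝ} (hx : x ≠ 0) : (j:ℝ) * x^(j-1) = (j:ℝ) * x^j / x := by
  cases j with
  | zero => simp
  | succ k => rw [Nat.add_sub_cancel, pow_succ]; field_simp

lemma hasDerivAt_bern (n j : ℕ) (x : ℝ) (hx0 : x ≠ 0) (hx1 : x ≠ 1) :
    HasDerivAt (bern n j) (bern n j x * ((j:ℝ)/x - ((n-j : ℕ):ℝ)/(1-x))) x := by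
  have hx1' : (1:ℝ) - x ≠ 0 := sub_ne_zero.mpr (Ne.symm hx1)
  have h1 : HasDerivAt (fun y : ℝ => y^j) ((j:ℝ)*x^(j-1)) x := hasDerivAt_pow j x
  have h2' : HasDerivAt (fun y : ℝ => y^(n-j)) (((n-j:ℕ):ℝ)*(1-x)^(n-j-1)) (1-x) :=
    hasDerivAt_pow (n-j) (1-x)
  have h3 : HasDerivAt (fun y : ℝ => (1:ℝ) - y) (-1) x := by
    simpa using (hasDerivAt_id x).const_sub 1
  have h2 := h2'.comp x h3
  simp only [Function.comp_def] at h2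
  have h4 := (h1.mul h2).const_mul ((n.choose j : ℝ))
  have hfun : bern n j = fun y => (n.choose j : ℝ) * (y^j * (1-y)^(n-j)) := by
    funext y; simp [bern]; ring
  rw [hfun]
  refine h4.congr_deriv ?_
  rw [cast_mul_pow_pred hx0, cast_mul_pow_pred (x := (1:ℝ)-x) hx1']
  field_simp
  ring

lemma hasDerivAt_rfun (j m : ℕ) (x : ℝ) (hx0 : x ≠ 0) (hx1 : x ≠ 1) :
    HasDerivAt (fun y : ℝ => (j:ℝ)/y - (m:ℝ)/(1-y))
      (-((j:ℝ)/x^2) - (m:ℝ)/(1-x)^2) x := by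
  have hx1' : (1:ℝ) - x ≠ 0 := sub_ne_zero.mpr (Ne.symm hx1)
  have h1 : HasDerivAt (fun y : ℝ => (j:ℝ)/y) ((j:ℝ) * (-(x^2)⁻¹)) x := by
    simpa [div_eq_mul_inv, mul_comm] using (hasDerivAt_inv hx0).const_mul (j:ℝ)
  have h2' : HasDerivAt (fun y : ℝ => (m:ℝ)/y) ((m:ℝ) * (-((1-x)^2)⁻¹)) (1-x) := by
    simpa [div_eq_mul_inv, mul_comm] using (hasDerivAt_inv hx1').const_mul (m:ℝ)
  have h3 : HasDerivAt (fun y : ℝ => (1:ℝ) - y) (-1) x := by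
    simpa using (hasDerivAt_id x).const_sub 1
  have h2 := h2'.comp x h3
  simp only [Function.comp_def] at h2
  have := h1.sub h2
  refine this.congr_deriv ?_
  field_simp

lemma eval_deriv_bern (n j : ℕ) (x : ℝ) (hx0 : x ≠ 0) (hx1 : x ≠ 1) :
    (derivative (bernsteinPolynomial ℝ n j)).eval x
      = bern n j x * ((j:ℝ)/x - ((n-j:ℕ):ℝ)/(1-x)) := by
  have hfun : (fun y => (bernsteinPolynomial ℝ n j).eval y) = bern n j :=
    funext fun y => eval_bern n j y
  have h := Polynomial.hasDerivAt (bernsteinPolynomial ℝ n j) x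
  rw [hfun] at h
  exact h.unique (hasDerivAt_bern n j x hx0 hx1)

lemma eval_deriv2_bern (n j : ℕ) (x : ℝ) (hx0 : x ≠ 0) (hx1 : x ≠ 1) :
    (derivative (derivative (bernsteinPolynomial ℝ n j))).eval x
      = bern n j x * (((j:ℝ)/x - ((n-j:ℕ):ℝ)/(1-x))^2 - (j:ℝ)/x^2 - ((n-j:ℕ):ℝ)/(1-x)^2) := by
  have hg : HasDerivAt (fun y => bern n j y * ((j:ℝ)/y - ((n-j:ℕ):ℝ)/(1-y)))
      (bern n j x * (((j:ℝ)/x - ((n-j:ℕ):ℝ)/(1-x))^2 - (j:ℝ)/x^2 - ((n-j:ℕ):ℝ)/(1-x)^2)) x := by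
    have := (hasDerivAt_bern n j x hx0 hx1).mul (hasDerivAt_rfun j (n-j) x hx0 hx1)
    refine this.congr_deriv ?_
    ring
  have heq : (fun y => (derivative (bernsteinPolynomial ℝ n j)).eval y)
      =ᶠ[nhds x] (fun y => bern n j y * ((j:ℝ)/y - ((n-j:ℕ):ℝ)/(1-y))) := by
    filter_upwards [eventually_ne_nhds hx0, eventually_ne_nhds hx1] with y hy0 hy1
    exact eval_deriv_bern n j y hy0 hy1
  have h := Polynomial.hasDerivAt (derivative (bernsteinPolynomial ℝ n j)) x
  exact h.unique (hg.congr_of_eventuallyEq heq)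

lemma Jop_bernstein (α β : ℝ) (n j : ℕ) (hj : j ≤ n) :
    Jop α β (bernsteinPolynomial ℝ n j) =
      (if j = 0 then (0:ℝ) else ((n:ℝ)+1-(j:ℝ))*((j:ℝ)+β)) • bernsteinPolynomial ℝ n (j-1)
      + ((j:ℝ)*((j:ℝ)-α-(n:ℝ)-1) + ((j:ℝ)-(n:ℝ))*((j:ℝ)+β+1)) • bernsteinPolynomial ℝ n j
      + (((j:ℝ)+1)*(α+(n:ℝ)-(j:ℝ))) • bernsteinPolynomial ℝ n (j+1) := by
  apply Polynomial.eq_of_infinite_eval_eq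
  refine Set.Infinite.mono ?_ (Set.Ioo_infinite (by norm_num : (0:ℝ) < 1))
  intro x hx
  have hx0 : x ≠ 0 := ne_of_gt hx.1
  have hx1 : x ≠ 1 := ne_of_lt hx.2
  show (Jop α β (bernsteinPolynomial ℝ n j)).eval x = _
  simp only [Jop, eval_add, eval_mul, eval_sub, eval_one, eval_X, eval_C, eval_smul,
    smul_eq_mul]
  rw [eval_deriv2_bern n j x hx0 hx1, eval_deriv_bern n j x hx0 hx1]
  simp only [eval_bern]
  have hx1' : (1:ℝ) - x ≠ 0 := sub_ne_zero.mpr (Ne.symm hx1)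
  rcases Nat.eq_zero_or_pos j with rfl | hjpos
  · rw [if_pos rfl]
    cases n with
    | zero => simp [bern]
    | succ k =>
      simp only [bern, Nat.choose_zero_right, Nat.choose_one_right, Nat.sub_zero,
        Nat.succ_sub_succ, Nat.sub_zero, Nat.cast_zero, Nat.cast_one, Nat.cast_succ,
        pow_zero]
      have hp : (1-x)^(k+1) = (1-x)^k * (1-x) := pow_succ _ _
      rw [hp]
      push_cast [Nat.choose_one_right]
      field_simp
      ring
  · obtain ⟨a, rfl⟩ : ∃ a, j = a + 1 := ⟨j - 1, by omega⟩
    rw [if_neg (Nat.succ_ne_zero a)]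
    rcases eq_or_lt_of_le hj with rfl | hlt
    · have s2 : a + 1 - 1 = a := by omega
      have s1 : a + 1 - (a + 1) = 0 := by omega
      have s3 : a + 1 - a = 1 := by omega
      have s4 : a + 1 + 1 - (a + 1) = 1 := by omega
      simp only [bern, s1, s2, s3, s4, Nat.choose_self, Nat.choose_succ_self_right,
        Nat.cast_one, pow_zero, pow_one]
      have hch : ((a+1).choose (a+1+1) : ℝ) = 0 := by
        rw [Nat.choose_eq_zero_of_lt (by omega)]; simp
      rw [hch]
      have hp : x^(a+1) = x^a * x := pow_succ _ _
      rw [hp]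
      push_cast
      field_simp
      ring
    · obtain ⟨b, rfl⟩ : ∃ b, n = a + b + 2 := ⟨n - a - 2, by omega⟩
      have s1 : a + b + 2 - (a + 1) = b + 1 := by omega
      have s2 : a + 1 - 1 = a := by omega
      have s3 : a + b + 2 - a = b + 2 := by omega
      have s4 : a + b + 2 - (a + 1 + 1) = b := by omega
      rw [s1, s2]
      simp only [bern, s1, s2, s3, s4]
      have r1 : ((a+b+2).choose (a+1) : ℝ) * (a+1) = ((a+b+2).choose a : ℝ) * (b+2) := by
        have := Nat.choose_succ_right_eq (a+b+2) a
        rw [s3] at this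
        exact_mod_cast congrArg (Nat.cast (R := ℝ)) this
      have r2 : ((a+b+2).choose (a+1+1) : ℝ) * (a+2) = ((a+b+2).choose (a+1) : ℝ) * (b+1) := by
        have := Nat.choose_succ_right_eq (a+b+2) (a+1)
        rw [s1] at this
        have := congrArg (Nat.cast (R := ℝ)) this
        push_cast at this
        linarith
      have e1 : ((a+b+2).choose a : ℝ) = ((a+b+2).choose (a+1) : ℝ) * (a+1) / (b+2) := by
        rw [eq_div_iff (by positivity)]
        linarith
      have e2 : ((a+b+2).choose (a+1+1) : ℝ) = ((a+b+2).choose (a+1) : ℝ) * (b+1) / (a+2) := by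
        rw [eq_div_iff (by positivity)]
        linarith
      rw [e1, e2]
      have hp1 : x^(a+1) = x^a * x := pow_succ _ _
      have hp2 : (1-x)^(b+1) = (1-x)^b * (1-x) := pow_succ _ _
      have hp3 : (1-x)^(b+2) = (1-x)^b * (1-x)^2 := by ring
      have hp4 : x^(a+1+1) = x^a * x^2 := by ring
      rw [hp1, hp2, hp3, hp4]
      push_cast
      field_simp
      ring

end DBproof

/-- Differential-recurrence relation (Theorem 3.4 of the paper). -/
theorem dualBernstein_diffRec_III (n : ℕ) (α β : ℝ) (hα : α > -1) (hβ : β > -1)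
    (D : ℕ → Polynomial ℝ) (hD : IsDualBernstein n α β D)
    (i : ℕ) (hi : i ≤ n) (x : ℝ) :
    x*(x-1) * (Polynomial.derivative (Polynomial.derivative (D i))).eval x
      + (1/2)*(α-β+(α+β+2)*(2*x-1)) * (Polynomial.derivative (D i)).eval x
      = ((i:ℝ)-n)*((i:ℝ)+β+1) * (D (i+1)).eval x
        + (i:ℝ)*((i:ℝ)-α-n-1) * (D (i-1)).eval x
        - ((i:ℝ)*((i:ℝ)-α-n-1) + ((i:ℝ)-n)*((i:ℝ)+β+1)) * (D i).eval x := by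
  classical
  obtain ⟨hdeg, hbi0⟩ := hD
  have hbi : ∀ k, k ≤ n → ∀ j, j ≤ n →
      DBproof.dbPair α β (bernsteinPolynomial ℝ n k) (D j) = if k = j then (1:ℝ) else 0 := by
    intro k hk j hj
    rw [← hbi0 k hk j hj, DBproof.dbPair]
    congr 1; funext y
    rw [DBproof.eval_bern]
    ring
  set P := DBproof.Jop α β (D i) with hP
  have hPdeg : P.natDegree ≤ n := DBproof.natDegree_Jop_le (hdeg i hi)
  have hexp := DBproof.expansion hα hβ hdeg hbi P hPdeg
  -- coefficients
  have hcoef : ∀ j : ℕ, j ≤ n → DBproof.dbPair α β (bernsteinPolynomial ℝ n j) P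
      = (if j = 0 then (0:ℝ) else ((n:ℝ)+1-(j:ℝ))*((j:ℝ)+β)) * (if j - 1 = i then 1 else 0)
        + ((j:ℝ)*((j:ℝ)-α-(n:ℝ)-1) + ((j:ℝ)-(n:ℝ))*((j:ℝ)+β+1)) * (if j = i then 1 else 0)
        + (((j:ℝ)+1)*(α+(n:ℝ)-(j:ℝ))) * (if j + 1 = i then 1 else 0) := by
    intro j hj
    rw [hP, DBproof.dbPair_Jop_symm hα hβ, DBproof.Jop_bernstein α β n j hj]
    rw [DBproof.dbPair_comm]
    rw [DBproof.dbPair_add_right hα hβ, DBproof.dbPair_add_right hα hβ]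
    rw [DBproof.dbPair_smul_right, DBproof.dbPair_smul_right, DBproof.dbPair_smul_right]
    rw [DBproof.dbPair_comm α β (D i) (bernsteinPolynomial ℝ n (j-1)),
      DBproof.dbPair_comm α β (D i) (bernsteinPolynomial ℝ n j),
      DBproof.dbPair_comm α β (D i) (bernsteinPolynomial ℝ n (j+1))]
    rw [hbi (j-1) (by omega) i hi, hbi j hj i hi]
    rcases Nat.lt_or_ge j n with hjn | hjn
    · rw [hbi (j+1) (by omega) i hi]
    · have hje : j = n := le_antisymm hj hjn
      have hz : bernsteinPolynomial ℝ n (j+1) = 0 :=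
        bernsteinPolynomial.eq_zero_of_lt ℝ (show n < j + 1 by omega)
      rw [hz, DBproof.dbPair_zero_left]
      rw [if_neg (by omega : ¬ j + 1 = i)]
  -- evaluate expansion at x
  have hx := congrArg (fun p : Polynomial ℝ => p.eval x) hexp
  simp only [Polynomial.eval_finset_sum, Polynomial.eval_smul, smul_eq_mul] at hx
  rw [Fin.sum_univ_eq_sum_range
    (fun k => DBproof.dbPair α β (bernsteinPolynomial ℝ n k) P * (D k).eval x) (n+1)] at hx
  have hx2 : P.eval x = ∑ j ∈ Finset.range (n+1),
      ((if j = 0 then (0:ℝ) else ((n:ℝ)+1-(j:ℝ))*((j:ℝ)+β)) * (if j - 1 = i then 1 else 0)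
        + ((j:ℝ)*((j:ℝ)-α-(n:ℝ)-1) + ((j:ℝ)-(n:ℝ))*((j:ℝ)+β+1)) * (if j = i then 1 else 0)
        + (((j:ℝ)+1)*(α+(n:ℝ)-(j:ℝ))) * (if j + 1 = i then 1 else 0)) * (D j).eval x := by
    rw [hx]
    refine Finset.sum_congr rfl fun j hj => ?_
    rw [hcoef j (by simpa [Nat.lt_succ_iff] using hj)]
  -- split into three sums
  have hsplit : P.eval x
      = (∑ j ∈ Finset.range (n+1), (if j = 0 then (0:ℝ) else ((n:ℝ)+1-(j:ℝ))*((j:ℝ)+β))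
          * (if j - 1 = i then 1 else 0) * (D j).eval x)
      + (∑ j ∈ Finset.range (n+1), ((j:ℝ)*((j:ℝ)-α-(n:ℝ)-1) + ((j:ℝ)-(n:ℝ))*((j:ℝ)+β+1))
          * (if j = i then 1 else 0) * (D j).eval x)
      + (∑ j ∈ Finset.range (n+1), (((j:ℝ)+1)*(α+(n:ℝ)-(j:ℝ)))
          * (if j + 1 = i then 1 else 0) * (D j).eval x) := by
    rw [hx2, ← Finset.sum_add_distrib, ← Finset.sum_add_distrib]
    refine Finset.sum_congr rfl fun j _ => ?_
    ring
  -- middle sum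
  have hS2 : (∑ j ∈ Finset.range (n+1), ((j:ℝ)*((j:ℝ)-α-(n:ℝ)-1) + ((j:ℝ)-(n:ℝ))*((j:ℝ)+β+1))
      * (if j = i then 1 else 0) * (D j).eval x)
      = ((i:ℝ)*((i:ℝ)-α-(n:ℝ)-1) + ((i:ℝ)-(n:ℝ))*((i:ℝ)+β+1)) * (D i).eval x := by
    rw [Finset.sum_eq_single i]
    · rw [if_pos rfl]; ring
    · intro j _ hji
      rw [if_neg hji]; ring
    · intro h
      exact absurd (Finset.mem_range.mpr (by omega)) h
  -- first sum
  have hS1 : (∑ j ∈ Finset.range (n+1), (if j = 0 then (0:ℝ) else ((n:ℝ)+1-(j:ℝ))*((j:ℝ)+β))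
      * (if j - 1 = i then 1 else 0) * (D j).eval x)
      = (if i < n then ((n:ℝ)+1-((i:ℝ)+1))*(((i:ℝ)+1)+β) * (D (i+1)).eval x else 0) := by
    rcases Nat.lt_or_ge i n with hin | hin
    · rw [if_pos hin, Finset.sum_eq_single (i+1)]
      · rw [if_neg (by omega : ¬ i + 1 = 0), if_pos (by omega : i + 1 - 1 = i)]
        push_cast
        ring
      · intro j _ hji
        by_cases hj0 : j = 0
        · subst hj0; rw [if_pos rfl]; ring
        · rw [if_neg (by omega : ¬ j - 1 = i)]; ring
      · intro h
        exact absurd (Finset.mem_range.mpr (by omega)) h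
    · rw [if_neg (by omega : ¬ i < n)]
      apply Finset.sum_eq_zero
      intro j hj
      have hjr : j ≤ n := by simpa [Nat.lt_succ_iff] using hj
      by_cases hj0 : j = 0
      · subst hj0; rw [if_pos rfl]; ring
      · rw [if_neg (by omega : ¬ j - 1 = i)]; ring
  -- third sum
  have hS3 : (∑ j ∈ Finset.range (n+1), (((j:ℝ)+1)*(α+(n:ℝ)-(j:ℝ)))
      * (if j + 1 = i then 1 else 0) * (D j).eval x)
      = (if 1 ≤ i then (((i:ℝ)-1)+1)*(α+(n:ℝ)-((i:ℝ)-1)) * (D (i-1)).eval x else 0) := by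
    rcases Nat.lt_or_ge i 1 with hi0 | hi1
    · rw [if_neg (by omega : ¬ 1 ≤ i)]
      apply Finset.sum_eq_zero
      intro j _
      rw [if_neg (by omega : ¬ j + 1 = i)]; ring
    · rw [if_pos hi1, Finset.sum_eq_single (i-1)]
      · rw [if_pos (by omega : i - 1 + 1 = i)]
        have : ((i-1 : ℕ) : ℝ) = (i:ℝ) - 1 := by
          have : (1:ℕ) ≤ i := hi1
          push_cast [Nat.cast_sub this]
          ring
        rw [this]
        ring
      · intro j _ hji
        rw [if_neg (by omega : ¬ j + 1 = i)]; ring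
      · intro h
        exact absurd (Finset.mem_range.mpr (by omega)) h
  -- LHS equals -(P.eval x)
  have hL : x*(x-1) * (Polynomial.derivative (Polynomial.derivative (D i))).eval x
      + (1/2)*(α-β+(α+β+2)*(2*x-1)) * (Polynomial.derivative (D i)).eval x
      = -(P.eval x) := by
    rw [hP]
    simp only [DBproof.Jop, Polynomial.eval_add, Polynomial.eval_mul, Polynomial.eval_sub,
      Polynomial.eval_one, Polynomial.eval_X, Polynomial.eval_C]
    ring
  rw [hL, hsplit, hS1, hS2, hS3]
  rcases Nat.lt_or_ge i n with hin | hin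
  · rw [if_pos hin]
    rcases Nat.lt_or_ge i 1 with hi0 | hi1
    · have hieq : i = 0 := by omega
      subst hieq
      rw [if_neg (by omega : ¬ 1 ≤ 0)]
      push_cast
      ring
    · rw [if_pos hi1]
      push_cast
      ring
  · have hieq : i = n := le_antisymm hi hin
    subst hieq
    rw [if_neg (by omega : ¬ i < i)]
    rcases Nat.lt_or_ge i 1 with hi0 | hi1
    · have h0 : i = 0 := by omega
      subst h0
      rw [if_neg (by omega : ¬ 1 ≤ 0)]
      push_cast
      ring
    · rw [if_pos hi1]
      push_cast
      ring
end
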